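/- Consider the linear ODE system on [0,T]: π'(t) = b·m(t) + (b' - c)·π(t), m'(t) = -c·m(t) - c'·π(t) + g(t), with π(0) = 0 and m(0) = 0, where b > 0, b', c ≥ 0, c' ∈ ℝ are constants and g : [0,T] → ℝ≥0 is continuous with g(t) > 0. Then there exist t̃ > 0 and constants C₁, C₂ > 0 such that for all t ∈ [0, t̃]: |π(t)| ≤ C₁ t ∫_0^t g(τ) dτ and m(t) ≥ C₂ ∫_0^t g(τ) dτ. -/

import Mathlib

open Set intervalIntegral

theorem ebt_boundary_cohort_estimates (T b b' c c' : ℝ) (hT : 0 < T)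
    (hb : 0 < b) (hb' : 0 ≤ b') (hc : 0 ≤ c)
    (g : ℝ → ℝ) (hg_cont : ContinuousOn g (Icc 0 T)) (hg_pos : ∀ t ∈ Icc (0:ℝ) T, 0 < g t)
    (π m : ℝ → ℝ) (hπ0 : π 0 = 0) (hm0 : m 0 = 0)
    (hπ : ∀ t ∈ Icc (0:ℝ) T, HasDerivAt π (b * m t + (b' - c) * π t) t)
    (hm : ∀ t ∈ Icc (0:ℝ) T, HasDerivAt m (-c * m t - c' * π t + g t) t) :
    ∃ ttilde > (0:ℝ), ttilde ≤ T ∧ ∃ C₁ > (0:ℝ), ∃ C₂ > (0:ℝ),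
      ∀ t ∈ Icc (0:ℝ) ttilde,
        |π t| ≤ C₁ * t * ∫ τ in (0:ℝ)..t, g τ ∧
        C₂ * ∫ τ in (0:ℝ)..t, g τ ≤ m t := by
  -- max of g
  obtain ⟨Mg, hMg⟩ : ∃ Mg, ∀ t ∈ Icc (0:ℝ) T, g t ≤ Mg := by
    obtain ⟨x, hx, hx'⟩ := isCompact_Icc.exists_isMaxOn (Set.nonempty_Icc.2 hT.le) hg_cont
    exact ⟨g x, hx'⟩
  have h0T : (0:ℝ) ∈ Icc (0:ℝ) T := ⟨le_refl 0, hT.le⟩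
  have hMg0 : 0 < Mg := lt_of_lt_of_le (hg_pos 0 h0T) (hMg 0 h0T)
  -- min of g
  obtain ⟨mg, hmg0, hmg⟩ : ∃ mg, 0 < mg ∧ ∀ t ∈ Icc (0:ℝ) T, mg ≤ g t := by
    obtain ⟨x, hx, hx'⟩ := isCompact_Icc.exists_isMinOn (Set.nonempty_Icc.2 hT.le) hg_cont
    exact ⟨g x, hg_pos x hx, hx'⟩
  -- constants
  set K : ℝ := b + |b' - c| + c + |c'| with hK_def
  have hK0 : 0 < K := by positivity
  set E0 : ℝ := Mg * Real.exp (K * T) with hE0_def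
  have hE00 : 0 < E0 := by positivity
  -- continuity of π and m on Icc 0 T
  have hπc : ContinuousOn π (Icc 0 T) := fun x hx =>
    ((hπ x hx).continuousAt).continuousWithinAt
  have hmc : ContinuousOn m (Icc 0 T) := fun x hx =>
    ((hm x hx).continuousAt).continuousWithinAt
  -- Gronwall for the pair
  set f : ℝ → ℝ × ℝ := fun t => (π t, m t) with hf_def
  set f' : ℝ → ℝ × ℝ := fun t =>
    (b * m t + (b' - c) * π t, -c * m t - c' * π t + g t) with hf'_def
  have hfst : ∀ t, |π t| ≤ ‖f t‖ := fun t => norm_fst_le (f t)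
  have hsnd : ∀ t, |m t| ≤ ‖f t‖ := fun t => norm_snd_le (f t)
  have hgron : ∀ t ∈ Icc (0:ℝ) T, ‖f t‖ ≤ gronwallBound 0 K Mg (t - 0) := by
    apply norm_le_gronwallBound_of_norm_deriv_right_le
    · exact hπc.prodMk hmc
    · intro x hx
      exact ((HasDerivAt.prodMk (hπ x (Ico_subset_Icc_self hx))
        (hm x (Ico_subset_Icc_self hx)))).hasDerivWithinAt
    · simp [hf_def, hπ0, hm0, Prod.norm_def]
    · intro x hx
      have hx' := Ico_subset_Icc_self hx
      have h1 : |b * m x + (b' - c) * π x| ≤ (b + |b' - c|) * ‖f x‖ := by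
        calc |b * m x + (b' - c) * π x| ≤ |b * m x| + |(b' - c) * π x| := abs_add_le _ _
          _ = b * |m x| + |b' - c| * |π x| := by
              rw [abs_mul, abs_mul, abs_of_pos hb]
          _ ≤ b * ‖f x‖ + |b' - c| * ‖f x‖ := by
              gcongr
              · exact hsnd x
              · exact hfst x
          _ = (b + |b' - c|) * ‖f x‖ := by ring
      have h2 : |-c * m x - c' * π x + g x| ≤ (c + |c'|) * ‖f x‖ + Mg := by
        calc |-c * m x - c' * π x + g x|
            ≤ |-c * m x - c' * π x| + |g x| := abs_add_le _ _
          _ ≤ |(-c) * m x| + |c' * π x| + |g x| := by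
              have := abs_sub (-c * m x) (c' * π x)
              gcongr
          _ = c * |m x| + |c'| * |π x| + |g x| := by
              rw [abs_mul, abs_mul, abs_neg, abs_of_nonneg hc]
          _ ≤ c * ‖f x‖ + |c'| * ‖f x‖ + Mg := by
              have hgx : |g x| ≤ Mg := by
                rw [abs_of_pos (hg_pos x hx')]; exact hMg x hx'
              gcongr
              · exact hsnd x
              · exact hfst x
          _ = (c + |c'|) * ‖f x‖ + Mg := by ring
      have hfx : 0 ≤ ‖f x‖ := norm_nonneg _
      rw [Prod.norm_def]
      refine max_le ?_ ?_
      · exact h1.trans (by nlinarith [abs_nonneg (b' - c), abs_nonneg c'])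
      · exact h2.trans (by nlinarith [abs_nonneg (b' - c), abs_nonneg c'])
  -- linear bound from Gronwall
  have hlin : ∀ t ∈ Icc (0:ℝ) T, ‖f t‖ ≤ E0 * t := by
    intro t ht
    have h := hgron t ht
    rw [sub_zero, gronwallBound_of_K_ne_0 hK0.ne'] at h
    have hexp : Real.exp (K * t) - 1 ≤ K * t * Real.exp (K * t) := by
      have h1 : 1 - K * t ≤ Real.exp (-(K * t)) := by
        have := Real.add_one_le_exp (-(K * t)); linarith
      have h2 : Real.exp (-(K * t)) * Real.exp (K * t) = 1 := by
        rw [← Real.exp_add]; simp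
      nlinarith [Real.exp_pos (K * t)]
    have hle : Real.exp (K * t) ≤ Real.exp (K * T) :=
      Real.exp_le_exp.2 (by nlinarith [ht.2, hK0])
    calc ‖f t‖ ≤ 0 * Real.exp (K * t) + Mg / K * (Real.exp (K * t) - 1) := h
      _ = Mg / K * (Real.exp (K * t) - 1) := by ring
      _ ≤ Mg / K * (K * t * Real.exp (K * t)) := by
          apply mul_le_mul_of_nonneg_left hexp (by positivity)
      _ = Mg * Real.exp (K * t) * t := by field_simp
      _ ≤ E0 * t := by
          rw [hE0_def]
          exact mul_le_mul_of_nonneg_right (mul_le_mul_of_nonneg_left hle hMg0.le) ht.1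
  have hπlin : ∀ t ∈ Icc (0:ℝ) T, |π t| ≤ E0 * t := fun t ht =>
    (hfst t).trans (hlin t ht)
  have hmlin : ∀ t ∈ Icc (0:ℝ) T, |m t| ≤ E0 * t := fun t ht =>
    (hsnd t).trans (hlin t ht)
  -- constants for quadratic bounds
  set L : ℝ := (b + |b' - c|) * E0 with hL_def
  have hL0 : 0 < L := by positivity
  set A : ℝ := (c + |c'|) * E0 + 1 with hA_def
  have hA0 : 0 < A := by positivity
  set ttilde : ℝ := min T (mg / A) with htt_def
  have htt0 : 0 < ttilde := lt_min hT (by positivity)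
  have httT : ttilde ≤ T := min_le_left _ _
  refine ⟨ttilde, htt0, httT, L / (2 * mg), by positivity, 1/2, by norm_num, ?_⟩
  intro t ht
  have htT : t ∈ Icc (0:ℝ) T := ⟨ht.1, ht.2.trans httT⟩
  have ht0 : 0 ≤ t := ht.1
  have hsub : Icc (0:ℝ) t ⊆ Icc 0 T := Icc_subset_Icc le_rfl htT.2
  have huIcc : uIcc (0:ℝ) t = Icc 0 t := uIcc_of_le ht0
  -- lower bound mg * t ≤ ∫ g
  have hgint : IntervalIntegrable g MeasureTheory.volume 0 t :=
    (hg_cont.mono hsub).intervalIntegrable_of_Icc ht0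
  have hGlb : mg * t ≤ ∫ τ in (0:ℝ)..t, g τ := by
    have : ∫ τ in (0:ℝ)..t, mg ≤ ∫ τ in (0:ℝ)..t, g τ := by
      apply intervalIntegral.integral_mono_on ht0 intervalIntegrable_const hgint
      intro x hx
      exact hmg x (hsub hx)
    simpa [mul_comm] using this
  have hG0 : 0 ≤ ∫ τ in (0:ℝ)..t, g τ := le_trans (by positivity) hGlb
  -- integrability of derivatives
  have hπ'c : ContinuousOn (fun s => b * m s + (b' - c) * π s) (Icc 0 T) := by
    exact (continuousOn_const.mul hmc).add (continuousOn_const.mul hπc)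
  have hm'c : ContinuousOn (fun s => -c * m s - c' * π s + g s) (Icc 0 T) := by
    exact (((continuousOn_const.mul hmc).sub (continuousOn_const.mul hπc)).add hg_cont)
  have hπ'int : IntervalIntegrable (fun s => b * m s + (b' - c) * π s)
      MeasureTheory.volume 0 t := ((hπ'c.mono hsub).intervalIntegrable_of_Icc ht0)
  have hcpint : IntervalIntegrable (fun s => -c * m s - c' * π s)
      MeasureTheory.volume 0 t :=
    ((((continuousOn_const.mul hmc).sub (continuousOn_const.mul hπc)).mono
      hsub).intervalIntegrable_of_Icc ht0)
  -- FTC for π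
  have hπeq : π t = ∫ s in (0:ℝ)..t, (b * m s + (b' - c) * π s) := by
    have := intervalIntegral.integral_eq_sub_of_hasDerivAt
      (f := π) (f' := fun s => b * m s + (b' - c) * π s)
      (fun s hs => hπ s (hsub (huIcc ▸ hs))) hπ'int
    rw [this, hπ0, sub_zero]
  -- FTC for m
  have hmeq : m t = (∫ s in (0:ℝ)..t, (-c * m s - c' * π s)) + ∫ s in (0:ℝ)..t, g s := by
    have h1 := intervalIntegral.integral_eq_sub_of_hasDerivAt
      (f := m) (f' := fun s => -c * m s - c' * π s + g s)
      (fun s hs => hm s (hsub (huIcc ▸ hs))) ((hm'c.mono hsub).intervalIntegrable_of_Icc ht0)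
    rw [intervalIntegral.integral_add hcpint hgint] at h1
    rw [h1, hm0, sub_zero]
  -- quadratic bound helper
  have hquad : ∀ (C : ℝ) (F : ℝ → ℝ), 0 ≤ C →
      IntervalIntegrable F MeasureTheory.volume 0 t →
      (∀ s ∈ Icc (0:ℝ) t, |F s| ≤ C * s) →
      |∫ s in (0:ℝ)..t, F s| ≤ C * t ^ 2 / 2 := by
    intro C F hC hFint hFb
    have h1 : |∫ s in (0:ℝ)..t, F s| ≤ ∫ s in (0:ℝ)..t, |F s| := by
      have := intervalIntegral.norm_integral_le_integral_norm (f := F) (a := 0) (b := t) (μ := MeasureTheory.volume) ht0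
      simpa [Real.norm_eq_abs] using this
    have h2 : ∫ s in (0:ℝ)..t, |F s| ≤ ∫ s in (0:ℝ)..t, C * s := by
      apply intervalIntegral.integral_mono_on ht0 hFint.abs
        (by apply ContinuousOn.intervalIntegrable; fun_prop)
      exact hFb
    have h3 : ∫ s in (0:ℝ)..t, C * s = C * t ^ 2 / 2 := by
      rw [intervalIntegral.integral_const_mul, integral_id]
      ring
    linarith
  -- bound on π
  have hπbd : |π t| ≤ L * t ^ 2 / 2 := by
    rw [hπeq]
    apply hquad L _ hL0.le hπ'int
    intro s hs
    have hsT : s ∈ Icc (0:ℝ) T := hsub hs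
    calc |b * m s + (b' - c) * π s| ≤ |b * m s| + |(b' - c) * π s| := abs_add_le _ _
      _ = b * |m s| + |b' - c| * |π s| := by rw [abs_mul, abs_mul, abs_of_pos hb]
      _ ≤ b * (E0 * s) + |b' - c| * (E0 * s) := by
          gcongr
          · exact hmlin s hsT
          · exact hπlin s hsT
      _ = L * s := by rw [hL_def]; ring
  have hmbd : |∫ s in (0:ℝ)..t, (-c * m s - c' * π s)| ≤ A * t ^ 2 / 2 := by
    apply hquad A _ hA0.le hcpint
    intro s hs
    have hsT : s ∈ Icc (0:ℝ) T := hsub hs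
    calc |-c * m s - c' * π s| ≤ |(-c) * m s| + |c' * π s| := by
          have := abs_sub (-c * m s) (c' * π s)
          simpa using this
      _ = c * |m s| + |c'| * |π s| := by rw [abs_mul, abs_mul, abs_neg, abs_of_nonneg hc]
      _ ≤ c * (E0 * s) + |c'| * (E0 * s) := by
          gcongr
          · exact hmlin s hsT
          · exact hπlin s hsT
      _ ≤ A * s := by rw [hA_def]; nlinarith [hs.1]
  constructor
  · -- |π t| ≤ C₁ t ∫ g
    calc |π t| ≤ L * t ^ 2 / 2 := hπbd
      _ = L / (2 * mg) * t * (mg * t) := by field_simp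
      _ ≤ L / (2 * mg) * t * ∫ τ in (0:ℝ)..t, g τ := by
          apply mul_le_mul_of_nonneg_left hGlb (by positivity)
  · -- m t ≥ (1/2) ∫ g
    have htA : A * t ≤ mg := by
      have : t ≤ mg / A := ht.2.trans (min_le_right _ _)
      calc A * t ≤ A * (mg / A) := by gcongr
        _ = mg := by field_simp
    have h1 : A * t ^ 2 / 2 ≤ (mg * t) / 2 := by
      calc A * t ^ 2 / 2 = (A * t) * t / 2 := by ring
        _ ≤ mg * t / 2 := by gcongr
    have h2' : -(A * t ^ 2 / 2) ≤ ∫ s in (0:ℝ)..t, (-c * m s - c' * π s) :=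
      (abs_le.1 hmbd).1
    rw [hmeq]
    linarith [hGlb]
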